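/- Fix r_h ∈ ℝ, ω_0 > 0, m > 0, c_h > 0, b_h ≠ 0 and let a, b, c, w : ℝ → ℝ. Assume that for all r in some right-neighbourhood of r_h: a(r) ≠ 0, b(r)² − a(r) c(r) > 0, and ω_0² + w(r)² a(r) ≥ m; and assume that as r → r_h from the right: b(r) → b_h, b(r)² − a(r) c(r) → 0, c(r) → c_h, and w is bounded. Define R_±(r) = ±(b(r)/a(r)) ω_0 + (1/a(r)) √(b(r)² − a(r) c(r)) √(ω_0² + w(r)² a(r)). Then, as r → r_h from the right, R_+(r) → c_h ω_0 / b_h and R_−(r) → −c_h ω_0 / b_h; in particular both potentials tend to finite nonzero limits that are equal in magnitude and opposite in sign. -/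

import Mathlib

open Real Filter Topology

/-- At a rotating horizon (`b → b_h ≠ 0`, `b² − a c → 0`, `c → c_h > 0`) the potentials
tend to finite nonzero limits `±c_h ω₀/b_h` of equal magnitude and opposite sign. -/
theorem stmt10 (r_h ω0 m c_h b_h : ℝ) (hω0 : 0 < ω0) (hm : 0 < m) (hch : 0 < c_h)
    (hbh : b_h ≠ 0)
    (a b c w : ℝ → ℝ)
    (hcond : ∀ᶠ r in 𝓝[>] r_h,
      a r ≠ 0 ∧ 0 < b r ^ 2 - a r * c r ∧ m ≤ ω0 ^ 2 + w r ^ 2 * a r)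
    (hb : Tendsto b (𝓝[>] r_h) (𝓝 b_h))
    (hdet : Tendsto (fun r => b r ^ 2 - a r * c r) (𝓝[>] r_h) (𝓝 0))
    (hc : Tendsto c (𝓝[>] r_h) (𝓝 c_h))
    (hw : ∃ M : ℝ, ∀ᶠ r in 𝓝[>] r_h, |w r| ≤ M)
    (Rp Rm : ℝ → ℝ)
    (hRp : ∀ r, Rp r = (b r / a r) * ω0 +
      (1 / a r) * Real.sqrt (b r ^ 2 - a r * c r) * Real.sqrt (ω0 ^ 2 + w r ^ 2 * a r))
    (hRm : ∀ r, Rm r = -(b r / a r) * ω0 +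
      (1 / a r) * Real.sqrt (b r ^ 2 - a r * c r) * Real.sqrt (ω0 ^ 2 + w r ^ 2 * a r)) :
    Tendsto Rp (𝓝[>] r_h) (𝓝 (c_h * ω0 / b_h)) ∧
    Tendsto Rm (𝓝[>] r_h) (𝓝 (-(c_h * ω0 / b_h))) ∧
    c_h * ω0 / b_h ≠ 0 := by
  have hne : c_h * ω0 / b_h ≠ 0 :=
    div_ne_zero (mul_ne_zero hch.ne' hω0.ne') hbh
  set F := 𝓝[>] r_h with hF
  have hac : Tendsto (fun r => a r * c r) F (𝓝 (b_h ^ 2)) := by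
    have h := (hb.pow 2).sub hdet
    simp only [sub_sub_cancel, sub_zero] at h
    exact h
  have hcne : ∀ᶠ r in F, c r ≠ 0 := hc.eventually_ne hch.ne'
  have ha : Tendsto a F (𝓝 (b_h ^ 2 / c_h)) := by
    have h := hac.div hc hch.ne'
    refine h.congr' ?_
    filter_upwards [hcne] with r hr
    show a r * c r / c r = a r
    field_simp
  have hane : b_h ^ 2 / c_h ≠ 0 := div_ne_zero (pow_ne_zero 2 hbh) hch.ne'
  -- first term
  have h1 : Tendsto (fun r => b r / a r * ω0) F (𝓝 (c_h * ω0 / b_h)) := by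
    have h := (hb.div ha hane).mul_const ω0
    have : b_h / (b_h ^ 2 / c_h) * ω0 = c_h * ω0 / b_h := by
      field_simp
    rwa [this] at h
  -- second term tends to 0
  obtain ⟨M, hM⟩ := hw
  set K := Real.sqrt (ω0 ^ 2 + M ^ 2 * (|b_h ^ 2 / c_h| + 1)) with hK
  have hinv : Tendsto (fun r => 1 / a r) F (𝓝 (1 / (b_h ^ 2 / c_h))) :=
    tendsto_const_nhds.div ha hane
  have hsq : Tendsto (fun r => Real.sqrt (b r ^ 2 - a r * c r)) F (𝓝 0) := by
    have h := (Real.continuous_sqrt.tendsto 0).comp hdet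
    simpa [Function.comp_def] using h
  have habs : ∀ᶠ r in F, |a r| ≤ |b_h ^ 2 / c_h| + 1 := by
    filter_upwards [ha.abs.eventually_lt_const (lt_add_one |b_h ^ 2 / c_h|)] with r hr
    exact hr.le
  have h2 : Tendsto (fun r => 1 / a r * Real.sqrt (b r ^ 2 - a r * c r) *
      Real.sqrt (ω0 ^ 2 + w r ^ 2 * a r)) F (𝓝 0) := by
    apply squeeze_zero_norm'
      (a := fun r => |1 / a r| * Real.sqrt (b r ^ 2 - a r * c r) * K)
    · filter_upwards [hM, habs] with r hMr har
      have hwsq : w r ^ 2 ≤ M ^ 2 := by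
        have := sq_abs (w r) ▸ pow_le_pow_left₀ (abs_nonneg _) hMr 2
        simpa [sq_abs] using this
      have hE : ω0 ^ 2 + w r ^ 2 * a r ≤ ω0 ^ 2 + M ^ 2 * (|b_h ^ 2 / c_h| + 1) := by
        have h1' : w r ^ 2 * a r ≤ w r ^ 2 * |a r| :=
          mul_le_mul_of_nonneg_left (le_abs_self _) (sq_nonneg _)
        have h2' : w r ^ 2 * |a r| ≤ M ^ 2 * (|b_h ^ 2 / c_h| + 1) :=
          mul_le_mul hwsq har (abs_nonneg _) (sq_nonneg _)
        linarith
      have hsE : Real.sqrt (ω0 ^ 2 + w r ^ 2 * a r) ≤ K := Real.sqrt_le_sqrt hE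
      have hnn : (0:ℝ) ≤ |1 / a r| * Real.sqrt (b r ^ 2 - a r * c r) :=
        mul_nonneg (abs_nonneg _) (Real.sqrt_nonneg _)
      calc ‖1 / a r * Real.sqrt (b r ^ 2 - a r * c r) *
          Real.sqrt (ω0 ^ 2 + w r ^ 2 * a r)‖
          = |1 / a r| * Real.sqrt (b r ^ 2 - a r * c r) *
            Real.sqrt (ω0 ^ 2 + w r ^ 2 * a r) := by
            rw [Real.norm_eq_abs, abs_mul, abs_mul,
              abs_of_nonneg (Real.sqrt_nonneg _), abs_of_nonneg (Real.sqrt_nonneg _)]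
        _ ≤ |1 / a r| * Real.sqrt (b r ^ 2 - a r * c r) * K :=
            mul_le_mul_of_nonneg_left hsE hnn
    · have h := (hinv.abs.mul hsq).mul_const K
      simpa using h
  refine ⟨?_, ?_, hne⟩
  · have h := h1.add h2
    simp only [add_zero] at h
    exact h.congr fun r => (hRp r).symm
  · have h1m : Tendsto (fun r => -(b r / a r) * ω0) F (𝓝 (-(c_h * ω0 / b_h))) := by
      have h := h1.neg
      refine h.congr fun r => ?_
      ring
    have h := h1m.add h2
    simp only [add_zero] at h
    exact h.congr fun r => (hRm r).symm
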